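/- Let X be a zero-dimensional Polish space, (K, d) a compact metric space, and μ a Borel probability measure on X. Then the continuous maps X → K are dense in the space of Borel maps X → K with respect to the pseudometric d_μ(f,g) = ∫ d(f(x), g(x)) dμ(x). -/

import Mathlib

open MeasureTheory Set

lemma exists_clopen_approx {X : Type*} [TopologicalSpace X] [PolishSpace X]
    [MeasurableSpace X] [BorelSpace X]
    (hzero : ∃ b : Set (Set X), TopologicalSpace.IsTopologicalBasis b ∧
      ∀ s ∈ b, IsClopen s)
    (μ : Measure X) [IsFiniteMeasure μ]
    {A : Set X} (hA : MeasurableSet A) {δ : ENNReal} (hδ : 0 < δ) :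
    ∃ C : Set X, IsClopen C ∧ μ (symmDiff A C) < δ := by
  obtain ⟨b, hb, hbc⟩ := hzero
  have hδ2 : (0:ENNReal) < δ/2 := ENNReal.half_pos hδ.ne'
  obtain ⟨U, hAU, hUopen, hUlt⟩ :=
    Set.exists_isOpen_lt_add A (measure_ne_top μ A) hδ2.ne'
  -- U as union of clopen basis sets
  set S : Set (Set X) := {s ∈ b | s ⊆ U} with hS
  have hSU : ⋃₀ S = U := by
    apply subset_antisymm
    · exact sUnion_subset fun s hs => hs.2
    · intro x hx
      obtain ⟨s, hsb, hxs, hsU⟩ := hb.exists_subset_of_mem_open hx hUopen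
      exact ⟨s, ⟨hsb, hsU⟩, hxs⟩
  obtain ⟨T, hTc, hTS, hTU⟩ := TopologicalSpace.isOpen_sUnion_countable S
    (fun s hs => (hbc s hs.1).2)
  rw [hSU] at hTU
  set T' : Set (Set X) := insert ∅ T with hT'
  have hT'c : T'.Countable := hTc.insert _
  obtain ⟨e, he⟩ := hT'c.exists_eq_range ⟨∅, mem_insert _ _⟩
  have heclopen : ∀ n, IsClopen (e n) := by
    intro n
    have : e n ∈ T' := he ▸ mem_range_self n
    rcases this with h | h
    · simp [h, isClopen_empty]
    · exact hbc _ (hTS h).1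
  have heU : ∀ n, e n ⊆ U := by
    intro n
    have : e n ∈ T' := he ▸ mem_range_self n
    rcases this with h | h
    · simp [h]
    · rw [← hTU]; exact subset_sUnion_of_mem h
  have hUe : U = ⋃ n, e n := by
    rw [← hTU]
    apply subset_antisymm
    · intro x hx
      obtain ⟨s, hsT, hxs⟩ := hx
      have : s ∈ T' := mem_insert_of_mem _ hsT
      rw [he] at this
      obtain ⟨n, rfl⟩ := this
      exact mem_iUnion.2 ⟨n, hxs⟩
    · exact iUnion_subset fun n => (heU n).trans hTU.symm.subset
  set V : ℕ → Set X := fun n => ⋃ k ∈ Finset.range (n+1), e k with hV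
  have hVclopen : ∀ n, IsClopen (V n) := by
    intro n
    exact isClopen_biUnion_finset (fun k _ => heclopen k)
  have hVU : ∀ n, V n ⊆ U := fun n => iUnion₂_subset fun k _ => heU k
  have hVmono : Monotone V := by
    intro m n hmn
    exact iUnion₂_mono' fun k hk => ⟨k, Finset.mem_range.2 (lt_of_lt_of_le (Finset.mem_range.1 hk) (by omega)), le_rfl⟩
  have hVunion : ⋃ n, V n = U := by
    rw [hUe]
    apply subset_antisymm
    · exact iUnion_subset fun n => iUnion₂_subset fun k _ => subset_iUnion e k
    · exact iUnion_subset fun n => subset_iUnion_of_subset n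
        (subset_iUnion₂_of_subset n (by simp) le_rfl)
  -- measures of U \ V n tend to 0
  have htend : Filter.Tendsto (fun n => μ (U \ V n)) Filter.atTop (nhds 0) := by
    have h0 : μ (⋂ n, U \ V n) = 0 := by
      rw [← diff_iUnion, hVunion, diff_self, measure_empty]
    have := tendsto_measure_iInter_atTop
      (μ := μ) (s := fun n => U \ V n)
      (fun n => (hUopen.measurableSet.diff (hVclopen n).isOpen.measurableSet).nullMeasurableSet)
      (fun m n hmn => diff_subset_diff_right (hVmono hmn))
      ⟨0, measure_ne_top μ _⟩
    rwa [h0] at this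
  obtain ⟨N, hN⟩ := (htend.eventually_lt_const hδ2).exists
  refine ⟨V N, hVclopen N, ?_⟩
  have h1 : μ (U \ A) < δ/2 := by
    have hd : μ (U \ A) = μ U - μ A :=
      measure_diff hAU hA.nullMeasurableSet (measure_ne_top μ A)
    rw [hd]
    exact ENNReal.sub_lt_of_lt_add (measure_mono hAU) (by rwa [add_comm] at hUlt)
  calc μ (symmDiff A (V N)) ≤ μ (U \ V N) + μ (U \ A) := by
        rw [symmDiff_def]
        refine (measure_union_le _ _).trans (add_le_add ?_ ?_)
        · exact measure_mono (diff_subset_diff_left hAU)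
        · exact measure_mono (diff_subset_diff_left (hVU N))
    _ < δ/2 + δ/2 := ENNReal.add_lt_add hN h1
    _ = δ := ENNReal.add_halves δ

/-- For a zero-dimensional Polish space `X`, a compact metric space `K`,
and a Borel probability measure `μ` on `X`, the continuous maps `X → K` are dense in
the Borel maps `X → K` for the pseudometric `d_μ(f,g) = ∫ d(f x, g x) dμ`. -/
theorem continuous_dense_in_borel_maps_zero_dimensional
    {X K : Type*} [TopologicalSpace X] [PolishSpace X]
    [MeasurableSpace X] [BorelSpace X]
    (hzero : ∃ b : Set (Set X), TopologicalSpace.IsTopologicalBasis b ∧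
      ∀ s ∈ b, IsClopen s)
    (μ : Measure X) [IsProbabilityMeasure μ]
    [MetricSpace K] [CompactSpace K] [MeasurableSpace K] [BorelSpace K]
    (f : X → K) (hf : Measurable f) :
    ∀ ε > (0 : ℝ), ∃ g : X → K, Continuous g ∧ (∫ x, dist (f x) (g x) ∂μ) < ε := by
  intro ε hε
  classical
  -- X and K are nonempty
  have hXne : Nonempty X := by
    by_contra h
    rw [not_nonempty_iff] at h
    have h1 : μ Set.univ = 1 := measure_univ
    rw [Set.univ_eq_empty_iff.2 h, measure_empty] at h1
    exact zero_ne_one h1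
  have hKne : Nonempty K := ⟨f (Classical.arbitrary X)⟩
  -- diameter bound
  obtain ⟨D, hD0, hdistD⟩ : ∃ D : ℝ, 0 ≤ D ∧ ∀ a b : K, dist a b ≤ D :=
    ⟨Metric.diam (Set.univ : Set K), Metric.diam_nonneg, fun a b =>
      Metric.dist_le_diam_of_mem isCompact_univ.isBounded (Set.mem_univ a) (Set.mem_univ b)⟩
  -- finite ε/3-net
  have hε3 : (0:ℝ) < ε/3 := by linarith
  obtain ⟨n, e, hcover0⟩ : ∃ (n : ℕ) (e : Fin n → K),
      ∀ y : K, ∃ i, y ∈ Metric.ball (e i) (ε/3) := by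
    obtain ⟨t, htfin, htcover⟩ := Metric.totallyBounded_iff.1
      (isCompact_univ : IsCompact (Set.univ : Set K)).totallyBounded (ε/3) hε3
    refine ⟨htfin.toFinset.card, fun i => (htfin.toFinset.equivFin.symm i : K), ?_⟩
    intro y
    have hy : y ∈ ⋃ z ∈ t, Metric.ball z (ε/3) := htcover (Set.mem_univ y)
    obtain ⟨z, hz, hyz⟩ := Set.mem_iUnion₂.1 hy
    have hzs : z ∈ htfin.toFinset := htfin.mem_toFinset.2 hz
    refine ⟨htfin.toFinset.equivFin ⟨z, hzs⟩, ?_⟩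
    simpa using hyz
  set B : Fin n → Set K := fun i => Metric.ball (e i) (ε/3) with hB
  have hcover : ∀ y : K, ∃ i, y ∈ B i := hcover0
  -- the partition A i
  set A : Fin n → Set X := fun i =>
    f ⁻¹' (B i) \ ⋃ j, ⋃ (_ : j < i), f ⁻¹' (B j) with hA
  have hAmeas : ∀ i, MeasurableSet (A i) := by
    intro i
    exact (hf Metric.isOpen_ball.measurableSet).diff
      (MeasurableSet.iUnion fun j => MeasurableSet.iUnion fun _ =>
        hf Metric.isOpen_ball.measurableSet)
  have hAcover : ∀ x : X, ∃ i, x ∈ A i := by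
    intro x
    obtain ⟨i, hi⟩ := hcover (f x)
    set u : Finset (Fin n) := Finset.univ.filter (fun j => f x ∈ B j) with hu
    have hune : u.Nonempty := ⟨i, by simp [u, hi]⟩
    refine ⟨u.min' hune, ?_, ?_⟩
    · have := u.min'_mem hune
      simp only [u, Finset.mem_filter] at this
      exact this.2
    · intro hmem
      rw [Set.mem_iUnion] at hmem
      obtain ⟨j, hmem⟩ := hmem
      rw [Set.mem_iUnion] at hmem
      obtain ⟨hjlt, hjmem⟩ := hmem
      have hle : u.min' hune ≤ j := u.min'_le j (by
        simp only [u, Finset.mem_filter, Finset.mem_univ, true_and]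
        exact hjmem)
      exact absurd hle (not_le.2 hjlt)
  have hAdisj : ∀ x : X, ∀ i j, x ∈ A i → x ∈ A j → i = j := by
    intro x i j hi hj
    by_contra hne
    rcases lt_trichotomy i j with h | h | h
    · exact hj.2 (Set.mem_iUnion.2 ⟨i, Set.mem_iUnion.2 ⟨h, hi.1⟩⟩)
    · exact hne h
    · exact hi.2 (Set.mem_iUnion.2 ⟨j, Set.mem_iUnion.2 ⟨h, hj.1⟩⟩)
  have hAball : ∀ i, ∀ x ∈ A i, dist (f x) (e i) < ε/3 := by
    intro i x hx
    exact Metric.mem_ball.1 hx.1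
  -- clopen approximations
  have hD1 : (0:ℝ) < D + 1 := by linarith
  have hn1 : (0:ℝ) < (n:ℝ) + 1 := by have : (0:ℝ) ≤ (n:ℝ) := Nat.cast_nonneg n; linarith
  have hpos1 : (0:ℝ) < 3*(D+1)*((n:ℝ)+1) :=
    mul_pos (mul_pos (by norm_num) hD1) hn1
  have hpos2 : (0:ℝ) < 3*(D+1) := mul_pos (by norm_num) hD1
  set r : ℝ := ε/(3*(D+1)*((n:ℝ)+1)) with hr
  have hr0 : 0 < r := div_pos hε hpos1
  set δ : ENNReal := ENNReal.ofReal r with hδdef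
  have hδ0 : 0 < δ := ENNReal.ofReal_pos.2 hr0
  have hC : ∀ i : Fin n, ∃ C : Set X, IsClopen C ∧ μ (symmDiff (A i) C) < δ :=
    fun i => exists_clopen_approx hzero μ (hAmeas i) hδ0
  choose C hCclopen hCμ using hC
  -- the bad set
  set E : Set X := ⋃ i, symmDiff (A i) (C i) with hE
  have hEmeas : MeasurableSet E :=
    MeasurableSet.iUnion fun i => (hAmeas i).symmDiff (hCclopen i).isOpen.measurableSet
  have hEμ : μ E ≤ (n : ENNReal) * δ := by
    calc μ E ≤ ∑ i : Fin n, μ (symmDiff (A i) (C i)) := measure_iUnion_fintype_le μ _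
      _ ≤ ∑ _i : Fin n, δ := Finset.sum_le_sum fun i _ => (hCμ i).le
      _ = (n : ENNReal) * δ := by simp [mul_comm]
  -- the continuous map g
  set P : X → (Fin n → Bool) := fun x i => (C i).boolIndicator x with hP
  have hPcont : Continuous P :=
    continuous_pi fun i => (continuous_boolIndicator_iff_isClopen _).2 (hCclopen i)
  set h0 : (Fin n → Bool) → K := fun b =>
    if hb : ∃ i, b i = true then e hb.choose else Classical.arbitrary K with hh0
  set g : X → K := h0 ∘ P with hg
  have hgcont : Continuous g := Continuous.comp continuous_of_discreteTopology hPcont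
  refine ⟨g, hgcont, ?_⟩
  -- pointwise estimate
  have hgood : ∀ x ∉ E, dist (f x) (g x) < ε/3 := by
    intro x hxE
    have hxE' : ∀ i, x ∉ symmDiff (A i) (C i) := by
      intro i hi
      exact hxE (Set.mem_iUnion.2 ⟨i, hi⟩)
    obtain ⟨i, hi⟩ := hAcover x
    have hxC : x ∈ C i := by
      by_contra hxC
      exact hxE' i (Or.inl ⟨hi, hxC⟩)
    have hb : ∃ j, P x j = true := ⟨i, (Set.mem_iff_boolIndicator _ _).1 hxC⟩
    have hgx : g x = e hb.choose := by
      simp only [hg, Function.comp_apply, hh0, dif_pos hb]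
    have hxCj : x ∈ C hb.choose := (Set.mem_iff_boolIndicator _ _).2 hb.choose_spec
    have hxAj : x ∈ A hb.choose := by
      by_contra hxA
      exact hxE' hb.choose (Or.inr ⟨hxCj, hxA⟩)
    have : hb.choose = i := hAdisj x _ i hxAj hi
    rw [hgx, this]
    exact hAball i x hi
  -- integrability and integral bounds
  have hmeasd : Measurable fun x => dist (f x) (g x) := hf.dist hgcont.measurable
  have hintd : Integrable (fun x => dist (f x) (g x)) μ := by
    refine Integrable.mono' (integrable_const D) hmeasd.aestronglyMeasurable ?_
    filter_upwards with x
    rw [Real.norm_eq_abs, abs_of_nonneg dist_nonneg]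
    exact hdistD _ _
  set φ : X → ℝ := fun x => ε/3 + E.indicator (fun _ => D) x with hφ
  have hintφ : Integrable φ μ :=
    (integrable_const _).add ((integrable_const D).indicator hEmeas)
  have hptwise : ∀ x, dist (f x) (g x) ≤ φ x := by
    intro x
    by_cases hx : x ∈ E
    · simp only [hφ, Set.indicator_of_mem hx]
      have := hdistD (f x) (g x)
      linarith
    · simp only [hφ, Set.indicator_of_notMem hx, add_zero]
      exact (hgood x hx).le
  have hint1 : (∫ x, dist (f x) (g x) ∂μ) ≤ ∫ x, φ x ∂μ :=
    integral_mono hintd hintφ hptwise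
  have hint2 : (∫ x, φ x ∂μ) = ε/3 + (μ E).toReal * D := by
    rw [hφ, integral_add (integrable_const _) ((integrable_const D).indicator hEmeas),
      integral_const, integral_indicator_const _ hEmeas]
    simp [measure_univ, measureReal_def]
  -- bound (μ E).toReal
  have hEfin : μ E ≠ ⊤ := (measure_lt_top μ E).ne
  have hEreal : (μ E).toReal ≤ (n : ℝ) * r := by
    have h1 : ((n : ENNReal) * δ).toReal = (n : ℝ) * r := by
      rw [ENNReal.toReal_mul, hδdef, ENNReal.toReal_ofReal hr0.le]
      simp
    calc (μ E).toReal ≤ ((n : ENNReal) * δ).toReal :=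
          ENNReal.toReal_mono (by simp [hδdef, ENNReal.mul_ne_top]) hEμ
      _ = (n : ℝ) * r := h1
  have hEreal0 : 0 ≤ (μ E).toReal := ENNReal.toReal_nonneg
  have hfinal : ε/3 + (μ E).toReal * D < ε := by
    have hnr : (n : ℝ) * r ≤ ε/(3*(D+1)) := by
      rw [hr]
      have heq : (n:ℝ) * (ε / (3*(D+1)*((n:ℝ)+1))) = ((n:ℝ)/((n:ℝ)+1)) * (ε/(3*(D+1))) := by
        rw [div_mul_div_comm, mul_div_assoc']
        congr 1
        ring
      rw [heq]
      have hle1 : (n:ℝ)/((n:ℝ)+1) ≤ 1 := by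
        rw [div_le_one hn1]; linarith
      have h2 : 0 ≤ ε/(3*(D+1)) := le_of_lt (div_pos hε hpos2)
      nlinarith
    have hDbound : (μ E).toReal * D ≤ ε/(3*(D+1)) * D := by
      apply mul_le_mul_of_nonneg_right (hEreal.trans hnr) hD0
    have : ε/(3*(D+1)) * D ≤ ε/3 := by
      rw [div_mul_eq_mul_div, div_le_div_iff₀ hpos2 (by norm_num : (0:ℝ) < 3)]
      nlinarith
    linarith
  calc (∫ x, dist (f x) (g x) ∂μ) ≤ ∫ x, φ x ∂μ := hint1
    _ = ε/3 + (μ E).toReal * D := hint2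
    _ < ε := hfinal
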